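/- arXiv:2111.01279 — 2 statements merged into one kernel-verified Lean document; each statement's English description precedes it below -/
import Mathlib

section
/- The base dynamic-programming recurrence correctly counts ascent sequences: define f(n, a, l) by f(0, a, l) = 1 and f(n, a, l) = Σ_{i=0}^{a+1} f(n−1, a + χ(l<i), i) for n ≥ 1, where χ(l<i) is 1 if l < i and 0 otherwise. Then for n ≥ 1 the number of ascent sequences of length n equals f(n−1, 0, 0). -/
open Filter Topology

/-- Number of ascents in a sequence (list) of naturals. -/
def asc (s : List ℕ) : ℕ :=
  ((s.zip s.tail).filter (fun p => p.1 < p.2)).length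

/-- `s` is an ascent sequence: first entry `0`, and each later entry is at most
one more than the number of ascents of the preceding prefix. -/
def IsAscentSeq (s : List ℕ) : Prop :=
  (0 < s.length → s.getD 0 0 = 0) ∧
  ∀ i, 0 < i → i < s.length → s.getD i 0 ≤ asc (s.take i) + 1

/-- `s` is a weak ascent sequence: every entry is at most the number of ascents. -/
def IsWeakAscentSeq (s : List ℕ) : Prop :=
  ∀ x ∈ s, x ≤ asc s

/-- `s` contains the pattern `p`: some subsequence of `s` is order-isomorphic
(including equalities) to `p`. -/
def ContainsPattern (s p : List ℕ) : Prop :=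
  ∃ idx : Fin p.length → ℕ, StrictMono idx ∧ (∀ a, idx a < s.length) ∧
    ∀ a b : Fin p.length, p.get a < p.get b ↔ s.getD (idx a) 0 < s.getD (idx b) 0

def AvoidsPattern (s p : List ℕ) : Prop := ¬ ContainsPattern s p

/-- A pattern of length `j` is a permutation of `0,…,j-1`. -/
def IsPattern (p : List ℕ) : Prop := List.Perm p (List.range p.length)

/-- Sum-indecomposable: no proper prefix whose entries are all smaller than
all entries of the complementary suffix. -/
def SumIndecomposable (p : List ℕ) : Prop :=
  ¬ ∃ i, 0 < i ∧ i < p.length ∧ ∀ x ∈ p.take i, ∀ y ∈ p.drop i, x < y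

/-- Number of `p`-avoiding ascent sequences of length `k`. -/
noncomputable def ascentAvoidCount (p : List ℕ) (k : ℕ) : ℕ :=
  {s : List ℕ | s.length = k ∧ IsAscentSeq s ∧ AvoidsPattern s p}.ncard

/-- Number of `p`-avoiding weak ascent sequences of length `k`. -/
noncomputable def weakAvoidCount (p : List ℕ) (k : ℕ) : ℕ :=
  {s : List ℕ | s.length = k ∧ IsWeakAscentSeq s ∧ AvoidsPattern s p}.ncard

def listMax (s : List ℕ) : ℕ := s.foldr max 0
def listMin (s : List ℕ) : ℕ := s.foldr min (listMax s)

/-- Reverse-complement map: `m j = max + min - n (k+1-j)`. -/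
def revComp (s : List ℕ) : List ℕ :=
  s.reverse.map (fun x => listMax s + listMin s - x)

/-- Occurrence of pattern 000: three equal entries. -/
def Contains000 (s : List ℕ) : Prop :=
  ∃ a b c, a < b ∧ b < c ∧ c < s.length ∧
    s.getD a 0 = s.getD b 0 ∧ s.getD b 0 = s.getD c 0

/-- Occurrence of pattern 100: `n i₁ > n i₂ = n i₃`. -/
def Contains100 (s : List ℕ) : Prop :=
  ∃ a b c, a < b ∧ b < c ∧ c < s.length ∧
    s.getD b 0 < s.getD a 0 ∧ s.getD b 0 = s.getD c 0

/-- Occurrence of pattern 110: `n i₁ = n i₂ > n i₃`. -/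
def Contains110 (s : List ℕ) : Prop :=
  ∃ a b c, a < b ∧ b < c ∧ c < s.length ∧
    s.getD a 0 = s.getD b 0 ∧ s.getD c 0 < s.getD b 0

/-- Occurrence of pattern 120: `n i₂ > n i₁ > n i₃`. -/
def Contains120 (s : List ℕ) : Prop :=
  ∃ a b c, a < b ∧ b < c ∧ c < s.length ∧
    s.getD a 0 < s.getD b 0 ∧ s.getD c 0 < s.getD a 0

/-- Occurrence of pattern 201: `n i₁ > n i₃ > n i₂`. -/
def Contains201 (s : List ℕ) : Prop :=
  ∃ a b c, a < b ∧ b < c ∧ c < s.length ∧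
    s.getD c 0 < s.getD a 0 ∧ s.getD b 0 < s.getD c 0

/-- Occurrence of pattern 012: `n i₁ < n i₂ < n i₃`. -/
def Contains012 (s : List ℕ) : Prop :=
  ∃ a b c, a < b ∧ b < c ∧ c < s.length ∧
    s.getD a 0 < s.getD b 0 ∧ s.getD b 0 < s.getD c 0

/-- Occurrence of pattern 011: `n i₁ < n i₂ = n i₃`. -/
def Contains011 (s : List ℕ) : Prop :=
  ∃ a b c, a < b ∧ b < c ∧ c < s.length ∧
    s.getD a 0 < s.getD b 0 ∧ s.getD b 0 = s.getD c 0

/-- Occurrence of pattern 021: `n i₁ < n i₃ < n i₂`. -/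
def Contains021 (s : List ℕ) : Prop :=
  ∃ a b c, a < b ∧ b < c ∧ c < s.length ∧
    s.getD a 0 < s.getD c 0 ∧ s.getD c 0 < s.getD b 0

/-- Occurrence of pattern 102: `n i₂ < n i₁ < n i₃`. -/
def Contains102 (s : List ℕ) : Prop :=
  ∃ a b c, a < b ∧ b < c ∧ c < s.length ∧
    s.getD b 0 < s.getD a 0 ∧ s.getD a 0 < s.getD c 0

/-- The construction `C = 0101⋯01 W̃₁⋯W̃ₖ` from weak ascent sequences. -/
def buildC (k : ℕ) (W : Fin k → List ℕ) : List ℕ :=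
  (List.replicate k ([0,1] : List ℕ)).flatten ++
    (List.ofFn (fun h : Fin k =>
      (W h).map (fun x =>
        x + 1 + ∑ j ∈ Finset.univ.filter (fun j => j < h), listMax (W j)))).flatten

/-- The base dynamic programming recurrence. -/
def fbase : ℕ → ℕ → ℕ → ℕ
  | 0, _, _ => 1
  | n + 1, a, l => ∑ i ∈ Finset.range (a + 2), fbase n (a + if l < i then 1 else 0) i

def Valid : ℕ → ℕ → List ℕ → Prop
  | _, _, [] => True
  | a, l, y :: t => y ≤ a + 1 ∧ Valid (a + if l < y then 1 else 0) y t

lemma asc_cons_cons (x y : ℕ) (t : List ℕ) :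
    asc (x :: y :: t) = (if x < y then 1 else 0) + asc (y :: t) := by
  simp only [asc, List.zip, List.tail]
  by_cases h : x < y <;> simp [h, List.filter] <;> omega

lemma asc_append_singleton (p : List ℕ) (hp : p ≠ []) (y : ℕ) :
    asc (p ++ [y]) = asc p + (if p.getLast hp < y then 1 else 0) := by
  induction p with
  | nil => simp at hp
  | cons x q ih =>
    cases q with
    | nil => simp [asc, List.filter]; by_cases h : x < y <;> simp [h]
    | cons z q' =>
      have hne : (z :: q') ≠ [] := by simp
      rw [List.cons_append, List.cons_append, asc_cons_cons, ← List.cons_append, asc_cons_cons, ih hne]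
      rw [List.getLast_cons hne]
      omega

lemma validFrom_iff (t : List ℕ) : ∀ (p : List ℕ) (hp : p ≠ []),
    ((∀ j, j < t.length → t.getD j 0 ≤ asc ((p ++ t).take (p.length + j)) + 1)
    ↔ Valid (asc p) (p.getLast hp) t) := by
  induction t with
  | nil => intro p hp; simp [Valid]
  | cons y t ih =>
    intro p hp
    have htake : ∀ j : ℕ, (p ++ y :: t).take (p.length + (j + 1))
        = ((p ++ [y]) ++ t).take ((p ++ [y]).length + j) := by
      intro j
      rw [List.append_assoc]
      simp
      ring_nf
      omega
    have hgl : (p ++ [y]).getLast (by simp) = y := by simp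
    have hA := asc_append_singleton p hp y
    constructor
    · intro h
      refine ⟨?_, ?_⟩
      · have := h 0 (by simp)
        simpa [List.take_left] using this
      · have key := ih (p ++ [y]) (by simp)
        rw [hA, hgl] at key
        rw [← key]
        intro j hj
        have := h (j + 1) (by simpa using hj)
        simpa [htake j] using this
    · rintro ⟨h1, h2⟩ j hj
      cases j with
      | zero => simpa [List.take_left] using h1
      | succ j =>
        have key := ih (p ++ [y]) (by simp)
        rw [hA, hgl] at key
        rw [← key] at h2
        have := h2 j (by simpa using hj)
        simpa [htake j] using this

def flist : ℕ → ℕ → ℕ → Finset (List ℕ)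
  | 0, _, _ => {[]}
  | n + 1, a, l => (Finset.range (a + 2)).biUnion
      (fun i => (flist n (a + if l < i then 1 else 0) i).image (i :: ·))

lemma flist_card (n : ℕ) : ∀ a l, (flist n a l).card = fbase n a l := by
  induction n with
  | zero => intro a l; simp [flist, fbase]
  | succ n ih =>
    intro a l
    rw [flist, fbase, Finset.card_biUnion]
    · exact Finset.sum_congr rfl fun i _ => by
        rw [Finset.card_image_of_injective _ (List.cons_injective), ih]
    · intro i _ j _ hij
      simp only [Finset.disjoint_left, Finset.mem_image]
      rintro x ⟨u, _, rfl⟩ ⟨v, _, h⟩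
      exact hij (List.head_eq_of_cons_eq h.symm)

lemma flist_mem (n : ℕ) : ∀ a l t, t ∈ flist n a l ↔ (t.length = n ∧ Valid a l t) := by
  induction n with
  | zero =>
    intro a l t
    simp only [flist, Finset.mem_singleton]
    constructor
    · rintro rfl; exact ⟨rfl, trivial⟩
    · rintro ⟨h, _⟩; exact List.length_eq_zero_iff.mp h
  | succ n ih =>
    intro a l t
    simp only [flist, Finset.mem_biUnion, Finset.mem_range, Finset.mem_image]
    constructor
    · rintro ⟨i, hi, u, hu, rfl⟩
      obtain ⟨hlen, hv⟩ := (ih _ _ u).mp hu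
      exact ⟨by simp [hlen], by omega, hv⟩
    · rintro ⟨hlen, hv⟩
      cases t with
      | nil => simp at hlen
      | cons y u =>
        obtain ⟨hy, hv'⟩ := hv
        exact ⟨y, by omega, u, (ih _ _ u).mpr ⟨by simpa using hlen, hv'⟩, rfl⟩

lemma valid_ncard (n a l : ℕ) :
    {t : List ℕ | t.length = n ∧ Valid a l t}.ncard = fbase n a l := by
  have : {t : List ℕ | t.length = n ∧ Valid a l t} = ↑(flist n a l) := by
    ext t; simp [flist_mem]
  rw [this, Set.ncard_coe_finset, flist_card]

lemma isAscentSeq_cons (t : List ℕ) : IsAscentSeq (0 :: t) ↔ Valid 0 0 t := by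
  have h0 : asc [0] = 0 := by simp [asc]
  have hgl : ([0] : List ℕ).getLast (by simp) = 0 := rfl
  have key := validFrom_iff t [0] (by simp)
  rw [h0, hgl] at key
  rw [← key]
  constructor
  · rintro ⟨_, h⟩ j hj
    have := h (j + 1) (by omega) (by simpa using hj)
    simpa [Nat.add_comm 1 j, List.take_succ_cons] using this
  · intro h
    refine ⟨fun _ => rfl, ?_⟩
    intro i hi hlen
    obtain ⟨j, rfl⟩ : ∃ j, i = j + 1 := ⟨i - 1, by omega⟩
    have := h j (by simpa using hlen)
    simpa [Nat.add_comm 1 j, List.take_succ_cons] using this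

/-- The recurrence correctly counts ascent sequences: the number of ascent
sequences of length `n ≥ 1` is `f(n-1, 0, 0)`. -/
theorem stmt15 (n : ℕ) (hn : 1 ≤ n) :
    {s : List ℕ | s.length = n ∧ IsAscentSeq s}.ncard = fbase (n - 1) 0 0 := by
  have hset : {s : List ℕ | s.length = n ∧ IsAscentSeq s}
      = (fun t => 0 :: t) '' {t : List ℕ | t.length = n - 1 ∧ Valid 0 0 t} := by
    ext s
    simp only [Set.mem_setOf_eq, Set.mem_image]
    constructor
    · rintro ⟨hlen, hs⟩
      cases s with
      | nil => simp at hlen; omega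
      | cons y t =>
        have hy : y = 0 := hs.1 (by simp)
        subst hy
        exact ⟨t, ⟨by simp at hlen; omega, (isAscentSeq_cons t).mp hs⟩, rfl⟩
    · rintro ⟨t, ⟨hlen, hv⟩, rfl⟩
      exact ⟨by simp [hlen]; omega, (isAscentSeq_cons t).mpr hv⟩
  rw [hset, Set.ncard_image_of_injective _ (List.cons_injective), valid_ncard]
end

section
/- In the construction C = 0101⋯01 W̃₁⋯W̃_k from π-avoiding weak ascent sequences W₁,…,W_k (each of length k, with W̃_h = W_h + 1 + N₁ + ⋯ + N_{h−1}), if π is a sum-indecomposable pattern of length ≥ 3 then C avoids π; moreover the map (W₁,…,W_k) ↦ C is injective. -/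
open Filter Topology

/-! ### Auxiliary lemmas -/

lemma le_listMax {x : ℕ} : ∀ {s : List ℕ}, x ∈ s → x ≤ listMax s
  | a :: t, h => by
    rcases List.mem_cons.mp h with rfl | h
    · exact le_max_left _ _
    · exact le_trans (le_listMax h) (le_max_right _ _)

lemma getD_le_listMax {s : List ℕ} {t : ℕ} (ht : t < s.length) :
    s.getD t 0 ≤ listMax s := by
  refine le_listMax ?_
  rw [List.getD_eq_getElem _ _ ht]
  exact List.getElem_mem ht

lemma length_join_const {c : ℕ} : ∀ {L : List (List ℕ)},
    (∀ l ∈ L, l.length = c) → L.flatten.length = L.length * c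
  | [], _ => by simp
  | a :: t, h => by
    simp only [List.flatten_cons, List.length_append, List.length_cons,
      length_join_const (fun l hl => h l (List.mem_cons_of_mem _ hl)),
      h a List.mem_cons_self]
    ring

lemma getD_join_const {c : ℕ} : ∀ {L : List (List ℕ)},
    (∀ l ∈ L, l.length = c) → ∀ {h t : ℕ}, h < L.length → t < c →
    L.flatten.getD (h * c + t) 0 = (L.getD h []).getD t 0
  | a :: L, hL, 0, t, hh, ht => by
    have ha : a.length = c := hL a List.mem_cons_self
    simp only [List.flatten_cons, Nat.zero_mul, Nat.zero_add]
    rw [List.getD_append _ _ _ _ (by omega)]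
    rfl
  | a :: L, hL, h + 1, t, hh, ht => by
    have ha : a.length = c := hL a List.mem_cons_self
    simp only [List.flatten_cons]
    rw [show (h+1)*c + t = a.length + (h*c + t) by rw [ha]; ring,
      List.getD_append_right _ _ _ _ (by omega)]
    simp only [Nat.add_sub_cancel_left]
    exact getD_join_const (fun l hl => hL l (List.mem_cons_of_mem _ hl))
      (by simpa using hh) ht

lemma join_inj : ∀ {L L' : List (List ℕ)},
    L.map List.length = L'.map List.length → L.flatten = L'.flatten → L = L'
  | [], [], _, _ => rfl
  | a :: L, b :: L', hlen, hj => by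
    simp only [List.map_cons, List.cons.injEq] at hlen
    simp only [List.flatten_cons] at hj
    obtain ⟨h1, h2⟩ := List.append_inj hj hlen.1
    rw [h1, join_inj hlen.2 h2]

/-- The shift `N₁ + ⋯ + N_{h-1}` with a natural-number cutoff. -/
def auxSum (k : ℕ) (W : Fin k → List ℕ) (h : ℕ) : ℕ :=
  ∑ j ∈ Finset.univ.filter (fun j : Fin k => (j : ℕ) < h), listMax (W j)

lemma auxSum_fin (k : ℕ) (W : Fin k → List ℕ) (h : Fin k) :
    (∑ j ∈ Finset.univ.filter (fun j => j < h), listMax (W j)) = auxSum k W h.val := by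
  refine Finset.sum_congr ?_ (fun _ _ => rfl)
  exact Finset.filter_congr (fun j _ => Fin.lt_def)

lemma auxSum_mono (k : ℕ) (W : Fin k → List ℕ) {h1 h2 : ℕ} (h : h1 ≤ h2) :
    auxSum k W h1 ≤ auxSum k W h2 := by
  refine Finset.sum_le_sum_of_subset ?_
  intro j hj
  simp only [Finset.mem_filter, Finset.mem_univ, true_and] at hj ⊢
  omega

lemma auxSum_step (k : ℕ) (W : Fin k → List ℕ) {h : ℕ} (hh : h < k) :
    auxSum k W (h + 1) = auxSum k W h + listMax (W ⟨h, hh⟩) := by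
  unfold auxSum
  have : Finset.univ.filter (fun j : Fin k => (j : ℕ) < h + 1) =
      insert ⟨h, hh⟩ (Finset.univ.filter (fun j : Fin k => (j : ℕ) < h)) := by
    ext j
    simp only [Finset.mem_filter, Finset.mem_univ, true_and, Finset.mem_insert,
      Fin.ext_iff]
    omega
  rw [this, Finset.sum_insert (by simp)]
  ring

lemma auxSum_cross (k : ℕ) (W : Fin k → List ℕ) {h1 h2 : ℕ} (hh1 : h1 < k) (h : h1 < h2) :
    auxSum k W h1 + listMax (W ⟨h1, hh1⟩) ≤ auxSum k W h2 := by
  rw [← auxSum_step k W hh1]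
  exact auxSum_mono k W h

lemma buildC_length (k : ℕ) (W : Fin k → List ℕ) (hWlen : ∀ h, (W h).length = k) :
    (buildC k W).length = k * 2 + k * k := by
  unfold buildC
  rw [List.length_append,
    length_join_const (c := 2) (fun l hl => by rw [List.eq_of_mem_replicate hl]; rfl),
    length_join_const (c := k) (fun l hl => by
      obtain ⟨h, rfl⟩ := List.mem_ofFn.mp hl
      simp [hWlen]),
    List.length_replicate, List.length_ofFn]

lemma buildC_getD_prefix (k : ℕ) (W : Fin k → List ℕ) {q : ℕ} (hq : q < k * 2) :
    (buildC k W).getD q 0 ≤ 1 := by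
  unfold buildC
  have hlen : ((List.replicate k ([0,1] : List ℕ)).flatten).length = k * 2 := by
    rw [length_join_const (c := 2) (fun l hl => by rw [List.eq_of_mem_replicate hl]; rfl),
      List.length_replicate]
  rw [List.getD_append _ _ _ _ (by omega)]
  have hmem : ((List.replicate k ([0,1] : List ℕ)).flatten).getD q 0 ∈
      (List.replicate k ([0,1] : List ℕ)).flatten := by
    rw [List.getD_eq_getElem _ _ (by omega)]
    exact List.getElem_mem (by omega)
  obtain ⟨l, hl, hx⟩ := List.mem_flatten.mp hmem
  rw [List.eq_of_mem_replicate hl] at hx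
  have : (List.replicate k ([0,1] : List ℕ)).flatten.getD q 0 = 0 ∨
      (List.replicate k ([0,1] : List ℕ)).flatten.getD q 0 = 1 := by simpa using hx
  omega

lemma buildC_getD_block (k : ℕ) (W : Fin k → List ℕ) (hWlen : ∀ h, (W h).length = k)
    {h t : ℕ} (hh : h < k) (ht : t < k) :
    (buildC k W).getD (k * 2 + (h * k + t)) 0 =
      (W ⟨h, hh⟩).getD t 0 + 1 + auxSum k W h := by
  unfold buildC
  have hlen : ((List.replicate k ([0,1] : List ℕ)).flatten).length = k * 2 := by
    rw [length_join_const (c := 2) (fun l hl => by rw [List.eq_of_mem_replicate hl]; rfl),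
      List.length_replicate]
  rw [List.getD_append_right _ _ _ _ (by omega), hlen, Nat.add_sub_cancel_left]
  set L := List.ofFn (fun h : Fin k =>
    (W h).map (fun x => x + 1 + ∑ j ∈ Finset.univ.filter (fun j => j < h), listMax (W j)))
    with hL
  have hLc : ∀ l ∈ L, l.length = k := by
    intro l hl
    obtain ⟨h', rfl⟩ := List.mem_ofFn.mp hl
    simp [hWlen]
  rw [getD_join_const hLc (by simp [hL, hh]) ht]
  have hget : L.getD h [] = (W ⟨h, hh⟩).map
      (fun x => x + 1 + ∑ j ∈ Finset.univ.filter (fun j => j < (⟨h, hh⟩ : Fin k)),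
        listMax (W j)) := by
    rw [List.getD_eq_getElem _ _ (by simp [hL, hh])]
    simp [hL]
  rw [hget, List.getD_eq_getElem _ _ (by simp [hWlen, ht]),
    List.getElem_map, auxSum_fin, List.getD_eq_getElem _ _ (by simp [hWlen, ht])]

def segOf (k q : ℕ) : ℕ := if q < k * 2 then 0 else (q - k * 2) / k + 1

lemma segOf_mono (k : ℕ) {q q' : ℕ} (h : q ≤ q') : segOf k q ≤ segOf k q' := by
  unfold segOf
  by_cases h1 : q < k * 2
  · by_cases h2 : q' < k * 2 <;> simp [h1, h2]
  · have h2 : ¬ q' < k * 2 := by omega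
    simp only [if_neg h1, if_neg h2]
    exact Nat.succ_le_succ (Nat.div_le_div_right (by omega))

/-- If `π` is sum-indecomposable of length ≥ 3 and each `Wₕ` avoids `π`, then
`C = buildC k W` avoids `π`, and the map `(W₁,…,Wₖ) ↦ C` is injective. -/
theorem stmt17 (p : List ℕ) (hp : IsPattern p) (hp3 : 3 ≤ p.length)
    (hsi : SumIndecomposable p) (k : ℕ) (W W' : Fin k → List ℕ)
    (hW : ∀ h, (W h).length = k ∧ IsWeakAscentSeq (W h) ∧ AvoidsPattern (W h) p)
    (hW' : ∀ h, (W' h).length = k ∧ IsWeakAscentSeq (W' h) ∧ AvoidsPattern (W' h) p) :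
    AvoidsPattern (buildC k W) p ∧ (buildC k W = buildC k W' → W = W') := by
  have pnd : p.Nodup := hp.nodup_iff.mpr List.nodup_range
  have hWlen : ∀ h, (W h).length = k := fun h => (hW h).1
  constructor
  · rintro ⟨idx, hmono, hlt, hiff⟩
    obtain ⟨a0, ha0⟩ : ∃ a : Fin p.length, a.val = 0 := ⟨⟨0, by omega⟩, rfl⟩
    obtain ⟨a1, ha1⟩ : ∃ a : Fin p.length, a.val = 1 := ⟨⟨1, by omega⟩, rfl⟩
    obtain ⟨a2, ha2⟩ : ∃ a : Fin p.length, a.val = 2 := ⟨⟨2, by omega⟩, rfl⟩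
    obtain ⟨aN, haN⟩ : ∃ a : Fin p.length, a.val = p.length - 1 := ⟨⟨p.length - 1, by omega⟩, rfl⟩
    have lenC : (buildC k W).length = k * 2 + k * k := buildC_length k W hWlen
    simp only [lenC] at hlt
    have hk : 0 < k := by
      by_contra hk0
      have hk0' : k = 0 := by omega
      subst hk0'
      have := hlt a0
      omega
    -- distinct values
    have hne : ∀ a b : Fin p.length, a ≠ b →
        (buildC k W).getD (idx a) 0 ≠ (buildC k W).getD (idx b) 0 := by
      intro a b hab heq
      have hpne : p.get a ≠ p.get b := fun h => hab (pnd.get_inj_iff.mp h)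
      rcases hpne.lt_or_gt with h | h
      · have := (hiff a b).mp h; omega
      · have := (hiff b a).mp h; omega
    -- block decomposition
    have hblock : ∀ q, k * 2 ≤ q → q < k * 2 + k * k →
        ∃ (h t : ℕ) (hh : h < k), t < k ∧ q = k * 2 + (h * k + t) ∧ h = (q - k * 2) / k ∧
          (buildC k W).getD q 0 = (W ⟨h, hh⟩).getD t 0 + 1 + auxSum k W h := by
      intro q hq1 hq2
      set d := (q - k * 2) / k with hdd
      set r := (q - k * 2) % k with hrr
      have hd : d * k + r = q - k * 2 := by rw [mul_comm]; exact Nat.div_add_mod _ _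
      have hh : d < k := (Nat.div_lt_iff_lt_mul hk).mpr (by omega)
      have hr : r < k := Nat.mod_lt _ hk
      have hq' : q = k * 2 + (d * k + r) := by omega
      refine ⟨d, r, hh, hr, hq', hdd, ?_⟩
      conv_lhs => rw [hq']
      exact buildC_getD_block k W hWlen hh hr
    -- cross-segment comparison
    have hcross : ∀ a b : Fin p.length, segOf k (idx a) < segOf k (idx b) →
        (buildC k W).getD (idx a) 0 ≤ (buildC k W).getD (idx b) 0 := by
      intro a b hseg
      by_cases ha : idx a < k * 2
      · have hb : ¬ idx b < k * 2 := by
          intro hb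
          simp only [segOf, if_pos ha, if_pos hb] at hseg
          exact lt_irrefl 0 hseg
        obtain ⟨h, t, hh, ht, _, _, hv⟩ := hblock (idx b) (by omega) (hlt b)
        have := buildC_getD_prefix k W ha
        omega
      · have hb : ¬ idx b < k * 2 := by
          intro hb
          simp only [segOf, if_neg ha, if_pos hb] at hseg
          exact Nat.not_lt_zero _ hseg
        obtain ⟨h1, t1, hh1, ht1, _, hd1, hv1⟩ := hblock (idx a) (by omega) (hlt a)
        obtain ⟨h2, t2, hh2, ht2, _, hd2, hv2⟩ := hblock (idx b) (by omega) (hlt b)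
        have hseg' : h1 < h2 := by
          simp only [segOf, if_neg ha, if_neg hb] at hseg
          omega
        have hbd : (W ⟨h1, hh1⟩).getD t1 0 ≤ listMax (W ⟨h1, hh1⟩) :=
          getD_le_listMax (by rw [hWlen]; exact ht1)
        have hcr := auxSum_cross k W hh1 hseg'
        omega
    -- monotonicity of segments along the occurrence
    have hsmono : ∀ a b : Fin p.length, a.val ≤ b.val →
        segOf k (idx a) ≤ segOf k (idx b) := by
      intro a b hab
      rcases Nat.eq_or_lt_of_le hab with h | h
      · have : a = b := Fin.ext h
        subst this; exact le_rfl
      · exact segOf_mono k (le_of_lt (hmono (by exact h)))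
    by_cases hcase : segOf k (idx a0) = segOf k (idx aN)
    · -- all entries in a single segment
      have hall : ∀ a : Fin p.length, segOf k (idx a) = segOf k (idx a0) := by
        intro a
        have h1 := hsmono a0 a (by omega)
        have h2 := hsmono a aN (by have := a.isLt; omega)
        omega
      by_cases hpre : idx a0 < k * 2
      · -- all in the alternating prefix: three distinct values ≤ 1, absurd
        have hallpre : ∀ a : Fin p.length, idx a < k * 2 := by
          intro a
          have hs := hall a
          by_contra hcon
          simp only [segOf, if_neg hcon, if_pos hpre] at hs
          exact Nat.succ_ne_zero _ hs
        have v0 := buildC_getD_prefix k W (hallpre a0)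
        have v1 := buildC_getD_prefix k W (hallpre a1)
        have v2 := buildC_getD_prefix k W (hallpre a2)
        have n01 := hne a0 a1 (Fin.ne_of_val_ne (by omega))
        have n02 := hne a0 a2 (Fin.ne_of_val_ne (by omega))
        have n12 := hne a1 a2 (Fin.ne_of_val_ne (by omega))
        omega
      · -- all in one block: contradiction with avoidance of W h0
        obtain ⟨h0, t0, hh0, ht0, _, hd0, _⟩ := hblock (idx a0) (by omega) (hlt a0)
        have hfact : ∀ a : Fin p.length, ∃ t, t < k ∧ idx a = k * 2 + (h0 * k + t) ∧
            (buildC k W).getD (idx a) 0 = (W ⟨h0, hh0⟩).getD t 0 + 1 + auxSum k W h0 := by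
          intro a
          have hs := hall a
          have hbpre : ¬ idx a < k * 2 := by
            intro hcon
            simp only [segOf, if_pos hcon, if_neg hpre] at hs
            exact Nat.succ_ne_zero _ hs.symm
          obtain ⟨h, t, hh, ht, hq, hd, hv⟩ := hblock (idx a) (by omega) (hlt a)
          have hhh : h = h0 := by
            simp only [segOf, if_neg hbpre, if_neg hpre] at hs
            omega
          subst hhh
          exact ⟨t, ht, hq, hv⟩
        apply (hW ⟨h0, hh0⟩).2.2
        refine ⟨fun a => idx a - (k * 2 + h0 * k), ?_, ?_, ?_⟩
        · intro a b hab
          beta_reduce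
          obtain ⟨ta, hta, hqa, _⟩ := hfact a
          obtain ⟨tb, htb, hqb, _⟩ := hfact b
          have := hmono hab
          omega
        · intro a
          beta_reduce
          obtain ⟨ta, hta, hqa, _⟩ := hfact a
          rw [hWlen]
          omega
        · intro a b
          beta_reduce
          obtain ⟨ta, hta, hqa, hva⟩ := hfact a
          obtain ⟨tb, htb, hqb, hvb⟩ := hfact b
          have hea : idx a - (k * 2 + h0 * k) = ta := by omega
          have heb : idx b - (k * 2 + h0 * k) = tb := by omega
          rw [hea, heb, hiff a b, hva, hvb]
          omega
    · -- the occurrence straddles a boundary: contradiction with indecomposability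
      have hlt0 : segOf k (idx a0) < segOf k (idx aN) :=
        lt_of_le_of_ne (hsmono a0 aN (by omega)) hcase
      have hTne : (Finset.univ.filter
          (fun a : Fin p.length => segOf k (idx a) = segOf k (idx aN))).Nonempty :=
        ⟨aN, by simp⟩
      obtain ⟨i0, hi0T, hmin0⟩ : ∃ i0 ∈ Finset.univ.filter
          (fun a : Fin p.length => segOf k (idx a) = segOf k (idx aN)),
          ∀ a ∈ Finset.univ.filter
            (fun a : Fin p.length => segOf k (idx a) = segOf k (idx aN)), i0 ≤ a :=
        ⟨_, Finset.min'_mem _ hTne, fun a ha => Finset.min'_le _ a ha⟩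
      simp only [Finset.mem_filter, Finset.mem_univ, true_and] at hi0T
      have hmin : ∀ a : Fin p.length, segOf k (idx a) = segOf k (idx aN) → i0 ≤ a :=
        fun a ha => hmin0 a (by simp [ha])
      have hipos : 0 < i0.val := by
        by_contra hcon
        have h0 : i0 = a0 := Fin.ext (by omega)
        rw [h0] at hi0T
        omega
      have key : ∀ a b : Fin p.length, a.val < i0.val → i0.val ≤ b.val →
          p.get a < p.get b := by
        intro a b hai hib
        have hsa : segOf k (idx a) < segOf k (idx aN) := by
          have h1 := hsmono a aN (by have := a.isLt; omega)
          rcases Nat.lt_or_ge (segOf k (idx a)) (segOf k (idx aN)) with h | h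
          · exact h
          · have heqm : segOf k (idx a) = segOf k (idx aN) := by omega
            have := hmin a heqm
            rw [Fin.le_def] at this
            omega
        have hsb : segOf k (idx b) = segOf k (idx aN) := by
          have h1 := hsmono b aN (by have := b.isLt; omega)
          have h2 := hsmono i0 b (by omega)
          omega
        have hle := hcross a b (by omega)
        have hne' := hne a b (Fin.ne_of_val_ne (by omega))
        exact (hiff a b).mpr (by omega)
      refine hsi ⟨i0.val, hipos, i0.isLt, ?_⟩
      intro x hx y hy
      obtain ⟨jx, hjx, hgx⟩ := List.mem_iff_getElem.mp hx
      obtain ⟨jy, hjy, hgy⟩ := List.mem_iff_getElem.mp hy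
      rw [List.length_take] at hjx
      rw [List.length_drop] at hjy
      have hjx2 : jx < p.length := by have := i0.isLt; omega
      have hjy2 : i0.val + jy < p.length := by omega
      rw [List.getElem_take] at hgx
      rw [List.getElem_drop] at hgy
      have hkey := key ⟨jx, hjx2⟩ ⟨i0.val + jy, hjy2⟩ (by show jx < i0.val; omega)
        (by show i0.val ≤ i0.val + jy; omega)
      rw [← hgx, ← hgy]
      simpa [List.get_eq_getElem] using hkey
  · -- injectivity
    intro heq
    have hW'len : ∀ h, (W' h).length = k := fun h => (hW' h).1
    unfold buildC at heq
    have hjoin := List.append_cancel_left heq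
    have hmapeq : (List.ofFn (fun h : Fin k => (W h).map
          (fun x => x + 1 + ∑ j ∈ Finset.univ.filter (fun j => j < h), listMax (W j)))).map
          List.length =
        (List.ofFn (fun h : Fin k => (W' h).map
          (fun x => x + 1 + ∑ j ∈ Finset.univ.filter (fun j => j < h), listMax (W' j)))).map
          List.length := by
      rw [List.map_ofFn, List.map_ofFn]
      congr 1
      funext h
      simp [hWlen, hW'len]
    have hblocks := List.ofFn_inj.mp (join_inj hmapeq hjoin)
    have main : ∀ m : ℕ, ∀ hm : m < k, W ⟨m, hm⟩ = W' ⟨m, hm⟩ := by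
      intro m
      induction m using Nat.strong_induction_on with
      | _ m ih =>
        intro hm
        have hb := congrFun hblocks ⟨m, hm⟩
        have hsum : (∑ j ∈ Finset.univ.filter (fun j => j < (⟨m, hm⟩ : Fin k)),
            listMax (W j)) =
            (∑ j ∈ Finset.univ.filter (fun j => j < (⟨m, hm⟩ : Fin k)), listMax (W' j)) := by
          refine Finset.sum_congr rfl (fun j hj => ?_)
          simp only [Finset.mem_filter, Finset.mem_univ, true_and, Fin.lt_def] at hj
          have := ih j.val hj j.isLt
          exact congrArg listMax (by simpa [Fin.eta] using this)
        simp only [hsum] at hb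
        exact List.map_injective_iff.mpr (fun x y hxy => by omega) hb
    funext h
    have := main h.val h.isLt
    simpa [Fin.eta] using this
end
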